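/- arXiv:1702.03750 — 8 statements merged into one kernel-verified Lean document; each statement's English description precedes it below -/
import Mathlib

section
/- Let n ≥ 2, let f be a real-valued function on the space of real n×n matrices that is differentiable at every point of SO(n), let Q ∈ SO(n), and let ε be a real number with 0 < ε ≤ 2/n. Then there exists a pair of indices (i,j) with 1 ≤ i < j ≤ n such that |⟨ProjGrad f(Q), Q δ_{i,j}⟩| ≥ ε · ‖ProjGrad f(Q)‖, where δ_{i,j} is the n×n matrix whose (j,i) entry is 1, whose (i,j) entry is −1, and all of whose other entries are 0. -/
open Matrix Real Filter Set

attribute [local instance] Matrix.frobeniusNormedAddCommGroup Matrix.frobeniusNormedSpace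

noncomputable def frobInner {n : ℕ} (A B : Matrix (Fin n) (Fin n) ℝ) : ℝ :=
  ∑ i, ∑ j, A i j * B i j

noncomputable def frobNorm {n : ℕ} (A : Matrix (Fin n) (Fin n) ℝ) : ℝ :=
  Real.sqrt (∑ i, ∑ j, (A i j) ^ 2)

def SOn (n : ℕ) : Set (Matrix (Fin n) (Fin n) ℝ) := {Q | Qᵀ * Q = 1 ∧ Q.det = 1}

noncomputable def grad {n : ℕ} (f : Matrix (Fin n) (Fin n) ℝ → ℝ)
    (Q : Matrix (Fin n) (Fin n) ℝ) : Matrix (Fin n) (Fin n) ℝ :=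
  Matrix.of fun k l => fderiv ℝ f Q (Matrix.single k l 1)

noncomputable def Lam {n : ℕ} (f : Matrix (Fin n) (Fin n) ℝ → ℝ)
    (Q : Matrix (Fin n) (Fin n) ℝ) : Matrix (Fin n) (Fin n) ℝ :=
  (1 / 2 : ℝ) • (Qᵀ * grad f Q - (grad f Q)ᵀ * Q)

noncomputable def projGrad {n : ℕ} (f : Matrix (Fin n) (Fin n) ℝ → ℝ)
    (Q : Matrix (Fin n) (Fin n) ℝ) : Matrix (Fin n) (Fin n) ℝ := Q * Lam f Q

noncomputable def givens {n : ℕ} (i j : Fin n) (θ : ℝ) : Matrix (Fin n) (Fin n) ℝ :=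
  Matrix.of fun k l =>
    if k = i ∧ l = i then Real.cos θ
    else if k = j ∧ l = j then Real.cos θ
    else if k = j ∧ l = i then Real.sin θ
    else if k = i ∧ l = j then -Real.sin θ
    else if k = l then 1 else 0

def deltaMat {n : ℕ} (i j : Fin n) : Matrix (Fin n) (Fin n) ℝ :=
  Matrix.of fun k l => if k = j ∧ l = i then 1 else if k = i ∧ l = j then -1 else 0

lemma frobInner_eq_trace {n : ℕ} (A B : Matrix (Fin n) (Fin n) ℝ) :
    frobInner A B = (Aᵀ * B).trace := by
  simp [frobInner, Matrix.trace, Matrix.diag, Matrix.mul_apply, Matrix.transpose_apply]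
  exact Finset.sum_comm
lemma frobInner_mul_left {n : ℕ} (Q A B : Matrix (Fin n) (Fin n) ℝ) (h : Qᵀ * Q = 1) :
    frobInner (Q * A) (Q * B) = frobInner A B := by
  rw [frobInner_eq_trace, frobInner_eq_trace, Matrix.transpose_mul, Matrix.mul_assoc,
    ← Matrix.mul_assoc Qᵀ, h, Matrix.one_mul]
lemma frobInner_std {n : ℕ} (A : Matrix (Fin n) (Fin n) ℝ) (k l : Fin n) :
    frobInner A (Matrix.single k l 1) = A k l := by
  simp [frobInner, Matrix.single, Finset.sum_ite_eq, ite_and]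
lemma deltaMat_eq {n : ℕ} (i j : Fin n) (hij : i ≠ j) :
    deltaMat i j = Matrix.single j i 1 - Matrix.single i j 1 := by
  ext k l
  by_cases h1 : k = j ∧ l = i <;> by_cases h2 : k = i ∧ l = j <;>
    simp_all [deltaMat, Matrix.single] <;> aesop
lemma frobInner_sub {n : ℕ} (A B C : Matrix (Fin n) (Fin n) ℝ) :
    frobInner A (B - C) = frobInner A B - frobInner A C := by
  simp [frobInner, mul_sub, Finset.sum_sub_distrib]
lemma frobInner_delta {n : ℕ} (A : Matrix (Fin n) (Fin n) ℝ) (i j : Fin n) (hij : i ≠ j) :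
    frobInner A (deltaMat i j) = A j i - A i j := by
  rw [deltaMat_eq i j hij, frobInner_sub, frobInner_std, frobInner_std]
lemma Lam_antisymm {n : ℕ} (f : Matrix (Fin n) (Fin n) ℝ → ℝ)
    (Q : Matrix (Fin n) (Fin n) ℝ) (i j : Fin n) : Lam f Q i j = - Lam f Q j i := by
  simp [Lam, Matrix.mul_apply, Matrix.transpose_apply, Matrix.sub_apply, mul_comm]
  ring
lemma frobNorm_eq {n : ℕ} (A : Matrix (Fin n) (Fin n) ℝ) :
    frobNorm A = Real.sqrt (frobInner A A) := by
  simp [frobNorm, frobInner, sq]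
lemma frobNorm_mul_left {n : ℕ} (Q A : Matrix (Fin n) (Fin n) ℝ) (h : Qᵀ * Q = 1) :
    frobNorm (Q * A) = frobNorm A := by
  rw [frobNorm_eq, frobNorm_eq, frobInner_mul_left _ _ _ h]

theorem stmt_0 {n : ℕ} (hn : 2 ≤ n) (f : Matrix (Fin n) (Fin n) ℝ → ℝ)
    (hf : ∀ Q ∈ SOn n, DifferentiableAt ℝ f Q)
    (Q : Matrix (Fin n) (Fin n) ℝ) (hQ : Q ∈ SOn n)
    (ε : ℝ) (hε : 0 < ε) (hε2 : ε ≤ 2 / n) :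
    ∃ i j : Fin n, i < j ∧
      ε * frobNorm (projGrad f Q) ≤ |frobInner (projGrad f Q) (Q * deltaMat i j)| := by
  have hn0 : (0:ℝ) < n := by positivity
  set L := Lam f Q with hL
  have hanti : ∀ i j, L i j = - L j i := Lam_antisymm f Q
  -- the sum of squares
  set S : ℝ := ∑ a, ∑ b, (L a b) ^ 2 with hS
  have hS0 : 0 ≤ S := by positivity
  -- key combinatorial step
  have key : ∃ i j : Fin n, i < j ∧ S ≤ (n : ℝ)^2 * (L j i)^2 := by
    obtain ⟨p, -, hp⟩ := Finset.exists_max_image (Finset.univ : Finset (Fin n × Fin n))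
      (fun p => (L p.1 p.2) ^ 2) ⟨(⟨0, by omega⟩, ⟨0, by omega⟩), Finset.mem_univ _⟩
    have hsum : S ≤ (n:ℝ)^2 * (L p.1 p.2)^2 := by
      rw [hS, ← Finset.sum_product']
      calc ∑ q : Fin n × Fin n, (L q.1 q.2) ^ 2
          ≤ ∑ _q : Fin n × Fin n, (L p.1 p.2) ^ 2 :=
            Finset.sum_le_sum fun q _ => hp q (Finset.mem_univ q)
        _ = (n:ℝ)^2 * (L p.1 p.2)^2 := by
            simp [Finset.sum_const, Finset.card_univ, sq]
    rcases lt_trichotomy p.1 p.2 with h | h | h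
    · exact ⟨p.1, p.2, h, by
        have h2 : (L p.2 p.1)^2 = (L p.1 p.2)^2 := by rw [hanti p.2 p.1]; ring
        rw [h2]; exact hsum⟩
    · -- diagonal: L p.1 p.2 = 0, so S = 0
      have hz : L p.1 p.2 = 0 := by
        have := hanti p.1 p.2; rw [h] at this ⊢; linarith [hanti p.2 p.2]
      refine ⟨⟨0, by omega⟩, ⟨1, by omega⟩, by simp [Fin.lt_def], ?_⟩
      have : S ≤ 0 := by simpa [hz] using hsum
      nlinarith [sq_nonneg (L ⟨1, by omega⟩ ⟨0, by omega⟩)]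
    · exact ⟨p.2, p.1, h, by linarith⟩
  obtain ⟨i, j, hij, hkey⟩ := key
  refine ⟨i, j, hij, ?_⟩
  have hQ1 : Qᵀ * Q = 1 := hQ.1
  have hijne : i ≠ j := ne_of_lt hij
  -- rewrite inner product and norm
  have hinner : frobInner (projGrad f Q) (Q * deltaMat i j) = L j i - L i j := by
    rw [projGrad, frobInner_mul_left _ _ _ hQ1, frobInner_delta _ _ _ hijne]
  have hnorm : frobNorm (projGrad f Q) = frobNorm L := by
    rw [projGrad, frobNorm_mul_left _ _ hQ1]
  have hnormle : frobNorm L ≤ (n:ℝ) * |L j i| := by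
    rw [frobNorm_eq]
    have : frobInner L L = S := by simp [frobInner, hS, sq]
    rw [this]
    have h2 : ((n:ℝ) * |L j i|)^2 = (n:ℝ)^2 * (L j i)^2 := by
      rw [mul_pow, sq_abs]
    calc Real.sqrt S ≤ Real.sqrt ((n:ℝ)^2 * (L j i)^2) := Real.sqrt_le_sqrt hkey
      _ = (n:ℝ) * |L j i| := by rw [← h2, Real.sqrt_sq (by positivity)]
  rw [hinner, hnorm]
  have habs : |L j i - L i j| = 2 * |L j i| := by
    rw [hanti i j]; rw [show L j i - - L j i = 2 * L j i by ring, abs_mul]; simp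
  rw [habs]
  calc ε * frobNorm L ≤ (2/n) * frobNorm L := by
        apply mul_le_mul_of_nonneg_right hε2
        rw [frobNorm_eq]; positivity
    _ ≤ (2/n) * ((n:ℝ) * |L j i|) := by
        apply mul_le_mul_of_nonneg_left hnormle (by positivity)
    _ = 2 * |L j i| := by field_simp
end

section
/- Let n ≥ 2, let f be a real-valued function on the space of real n×n matrices that is differentiable at Q ∈ SO(n), and let 1 ≤ i < j ≤ n. Define h(θ) := f(Q · G(i,j,θ)). Then the derivative of h at θ = 0 satisfies h'(0) = ⟨ProjGrad f(Q), Q δ_{i,j}⟩ = −2 Λ_{i,j}(Q), where δ_{i,j} is the n×n matrix whose (j,i) entry is 1, whose (i,j) entry is −1, and all other entries are 0. -/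
open Matrix Real Filter Set

attribute [local instance] Matrix.frobeniusNormedAddCommGroup Matrix.frobeniusNormedSpace

lemma givens_decomp {n : ℕ} (i j : Fin n) (hij : i ≠ j) (θ : ℝ) :
    givens i j θ = (1 - (Matrix.single i i (1:ℝ) + Matrix.single j j 1))
      + Real.cos θ • (Matrix.single i i (1:ℝ) + Matrix.single j j 1)
      + Real.sin θ • deltaMat i j := by
  ext k l
  simp only [givens, deltaMat, Matrix.of_apply, Matrix.add_apply, Matrix.sub_apply,
    Matrix.smul_apply, Matrix.one_apply, Matrix.single, smul_eq_mul]
  by_cases hki : k = i <;> by_cases hkj : k = j <;> by_cases hli : l = i <;>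
    by_cases hlj : l = j <;> subst_vars <;> simp_all [eq_comm] <;> ring

lemma fderiv_eq_frob {n : ℕ} (f : Matrix (Fin n) (Fin n) ℝ → ℝ)
    (Q M : Matrix (Fin n) (Fin n) ℝ) :
    fderiv ℝ f Q M = frobInner (grad f Q) M := by
  conv_lhs => rw [Matrix.matrix_eq_sum_single M]
  rw [map_sum]
  simp only [map_sum]
  refine Finset.sum_congr rfl fun k _ => Finset.sum_congr rfl fun l _ => ?_
  have : Matrix.single k l (M k l) = (M k l) • Matrix.single k l (1:ℝ) := by
    rw [Matrix.smul_single, smul_eq_mul, mul_one]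
  rw [this, ContinuousLinearMap.map_smul]
  simp [grad, mul_comm]

theorem stmt_1 {n : ℕ} (hn : 2 ≤ n) (f : Matrix (Fin n) (Fin n) ℝ → ℝ)
    (Q : Matrix (Fin n) (Fin n) ℝ) (hQ : Q ∈ SOn n)
    (hf : DifferentiableAt ℝ f Q) (i j : Fin n) (hij : i < j) :
    deriv (fun θ : ℝ => f (Q * givens i j θ)) 0 = frobInner (projGrad f Q) (Q * deltaMat i j) ∧
    deriv (fun θ : ℝ => f (Q * givens i j θ)) 0 = -2 * Lam f Q i j := by
  have hne : i ≠ j := ne_of_lt hij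
  set B := Matrix.single i i (1:ℝ) + Matrix.single j j 1 with hB
  set C := deltaMat i j with hC
  -- derivative of the curve
  have hcurve : HasDerivAt (fun θ : ℝ => Q * givens i j θ) (Q * C) 0 := by
    have h1 : HasDerivAt (fun θ : ℝ => Q * (1 - B)) 0 0 := hasDerivAt_const _ _
    have h2 : HasDerivAt (fun θ : ℝ => Real.cos θ • (Q * B)) ((-Real.sin 0) • (Q * B)) 0 :=
      (Real.hasDerivAt_cos 0).smul_const _
    have h3 : HasDerivAt (fun θ : ℝ => Real.sin θ • (Q * C)) ((Real.cos 0) • (Q * C)) 0 :=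
      (Real.hasDerivAt_sin 0).smul_const _
    have := (h1.add h2).add h3
    simp only [Real.sin_zero, Real.cos_zero, neg_zero, zero_smul, zero_add, one_smul] at this
    have hfun : (fun θ : ℝ => Q * givens i j θ) = ((fun θ : ℝ => Q * (1 - B)) +
        fun θ : ℝ => Real.cos θ • (Q * B)) + fun θ : ℝ => Real.sin θ • (Q * C) := by
      funext θ
      rw [givens_decomp i j hne θ, mul_add, mul_add, mul_smul_comm, mul_smul_comm]
      rfl
    rw [hfun]; exact this
  have hG0 : Q * givens i j 0 = Q := by
    rw [givens_decomp i j hne 0]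
    simp
  have hfd : HasFDerivAt f (fderiv ℝ f Q) (Q * givens i j 0) := by
    rw [hG0]; exact hf.hasFDerivAt
  have hcomp : HasDerivAt (fun θ : ℝ => f (Q * givens i j θ)) (fderiv ℝ f Q (Q * C)) 0 :=
    hfd.comp_hasDerivAt 0 hcurve
  have hderiv : deriv (fun θ : ℝ => f (Q * givens i j θ)) 0 = fderiv ℝ f Q (Q * C) :=
    hcomp.deriv
  -- algebraic identities
  have hfrob : fderiv ℝ f Q (Q * C) = frobInner (grad f Q) (Q * C) := fderiv_eq_frob f Q _
  have key : ∀ A : Matrix (Fin n) (Fin n) ℝ,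
      frobInner A (Q * C) = (Qᵀ * A) j i - (Qᵀ * A) i j := by
    intro A
    rw [frobInner_eq_trace, show Aᵀ * (Q * C) = (Qᵀ * A)ᵀ * C by
      rw [Matrix.transpose_mul, Matrix.transpose_transpose, Matrix.mul_assoc],
      ← frobInner_eq_trace, frobInner_delta _ _ _ hne]
  have hQQ : Qᵀ * Q = 1 := hQ.1
  have e1 : frobInner (projGrad f Q) (Q * C) = Lam f Q j i - Lam f Q i j := by
    rw [key, projGrad, ← Matrix.mul_assoc, hQQ, Matrix.one_mul]
  have hGT : ∀ a b : Fin n, ((grad f Q)ᵀ * Q) a b = (Qᵀ * grad f Q) b a := by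
    intro a b
    rw [show (grad f Q)ᵀ * Q = (Qᵀ * grad f Q)ᵀ by
      rw [Matrix.transpose_mul, Matrix.transpose_transpose]]
    rfl
  have hLam : ∀ a b : Fin n, Lam f Q a b =
      (1/2 : ℝ) * ((Qᵀ * grad f Q) a b - (Qᵀ * grad f Q) b a) := by
    intro a b
    simp [Lam, Matrix.sub_apply, hGT a b]
  have e2 : frobInner (grad f Q) (Q * C) = -2 * Lam f Q i j := by
    rw [key, hLam i j]; ring
  have e3 : Lam f Q j i - Lam f Q i j = -2 * Lam f Q i j := by
    rw [hLam i j, hLam j i]; ring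
  constructor
  · rw [hderiv, hfrob, e2, e1, e3]
  · rw [hderiv, hfrob, e2]
end

section
/- Let n ≥ 2 and let W ∈ ℝ^{n×n×n} be a symmetric third-order tensor. For θ ∈ ℝ, let T(θ) be the tensor with entries T_{ijk}(θ) = Σ_{p,q,r=1}^n W_{pqr} G_{pi} G_{qj} G_{rk}, where G = G(1,2,θ) is the Givens rotation in the (1,2)-plane, and define h(θ) := Σ_{j=1}^n T_{jjj}(θ)². Then for every θ ∈ ℝ, writing T = T(θ): h'(θ) = 6 (T_{111} T_{112} − T_{122} T_{222}) and h''(θ) = −6 (T_{111}² + T_{222}² − 3 T_{112}² − 3 T_{122}² − 2 T_{111} T_{122} − 2 T_{112} T_{222}). -/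
open Matrix Real Filter Set

attribute [local instance] Matrix.frobeniusNormedAddCommGroup Matrix.frobeniusNormedSpace

set_option maxHeartbeats 1000000 in
lemma givens_hasDerivAt {n : ℕ} {i j : Fin n} (hij : i ≠ j) (p a : Fin n) (θ : ℝ) :
    HasDerivAt (fun θ => givens i j θ p a)
      ((if a = i then 1 else if a = j then -1 else 0) *
        givens i j θ p (if a = i then j else if a = j then i else a)) θ := by
  have hc := Real.hasDerivAt_cos θ
  have hs := Real.hasDerivAt_sin θ
  unfold givens
  simp only [Matrix.of_apply]
  by_cases hpi : p = i <;> by_cases hpj : p = j <;> by_cases hai : a = i <;> by_cases haj : a = j <;>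
    subst_vars <;> simp_all [Ne.symm] <;>
    first
      | simpa using hc
      | simpa using hs
      | simpa using hs.neg
      | exact hasDerivAt_const _ _
      | exact hs.neg

set_option maxHeartbeats 1000000 in
theorem stmt_6 {n : ℕ} (hn : 2 ≤ n) (W : Fin n → Fin n → Fin n → ℝ)
    (hsym1 : ∀ p q r, W p q r = W q p r) (hsym2 : ∀ p q r, W p q r = W p r q)
    (i j : Fin n) (hi : (i : ℕ) = 0) (hj : (j : ℕ) = 1)
    (T : ℝ → Fin n → Fin n → Fin n → ℝ)
    (hT : ∀ θ a b c, T θ a b c =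
      ∑ p, ∑ q, ∑ r, W p q r * givens i j θ p a * givens i j θ q b * givens i j θ r c)
    (h : ℝ → ℝ) (hh : ∀ θ, h θ = ∑ s, (T θ s s s) ^ 2) (θ : ℝ) :
    deriv h θ = 6 * (T θ i i i * T θ i i j - T θ i j j * T θ j j j) ∧
    deriv (deriv h) θ = -6 * ((T θ i i i) ^ 2 + (T θ j j j) ^ 2 - 3 * (T θ i i j) ^ 2
      - 3 * (T θ i j j) ^ 2 - 2 * T θ i i i * T θ i j j - 2 * T θ i i j * T θ j j j) := by
  have hij : i ≠ j := by
    intro e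
    rw [Fin.ext_iff, hi, hj] at e
    exact absurd e (by norm_num)
  have hji : j ≠ i := Ne.symm hij
  -- symmetry of T
  have Ts1 : ∀ θ a b c, T θ a b c = T θ b a c := by
    intro θ a b c
    rw [hT, hT, Finset.sum_comm]
    refine Finset.sum_congr rfl fun q _ => Finset.sum_congr rfl fun p _ =>
      Finset.sum_congr rfl fun r _ => ?_
    rw [hsym1]; ring
  have Ts2 : ∀ θ a b c, T θ a b c = T θ a c b := by
    intro θ a b c
    rw [hT, hT]
    refine Finset.sum_congr rfl fun p _ => ?_
    rw [Finset.sum_comm]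
    refine Finset.sum_congr rfl fun r _ => Finset.sum_congr rfl fun q _ => ?_
    rw [hsym2]; ring
  -- general derivative of T
  have key : ∀ (θ : ℝ) (a b c : Fin n), HasDerivAt (fun θ => T θ a b c)
      ((if a = i then 1 else if a = j then -1 else 0) *
          T θ (if a = i then j else if a = j then i else a) b c
       + (if b = i then 1 else if b = j then -1 else 0) *
          T θ a (if b = i then j else if b = j then i else b) c
       + (if c = i then 1 else if c = j then -1 else 0) *
          T θ a b (if c = i then j else if c = j then i else c)) θ := by
    intro θ a b c
    have hfun : (fun θ => T θ a b c) = fun θ =>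
        ∑ p, ∑ q, ∑ r, W p q r * givens i j θ p a * givens i j θ q b * givens i j θ r c :=
      funext fun θ => hT θ a b c
    rw [hfun]
    set ra : ℝ := (if a = i then 1 else if a = j then -1 else 0) with hra
    set rb : ℝ := (if b = i then 1 else if b = j then -1 else 0) with hrb
    set rc : ℝ := (if c = i then 1 else if c = j then -1 else 0) with hrc
    set a' := (if a = i then j else if a = j then i else a) with ha'
    set b' := (if b = i then j else if b = j then i else b) with hb'
    set c' := (if c = i then j else if c = j then i else c) with hc'
    have H : HasDerivAt (fun θ => ∑ p, ∑ q, ∑ r,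
        W p q r * givens i j θ p a * givens i j θ q b * givens i j θ r c)
        (∑ p, ∑ q, ∑ r,
          (ra * (W p q r * givens i j θ p a' * givens i j θ q b * givens i j θ r c)
          + rb * (W p q r * givens i j θ p a * givens i j θ q b' * givens i j θ r c)
          + rc * (W p q r * givens i j θ p a * givens i j θ q b * givens i j θ r c'))) θ := by
      apply HasDerivAt.fun_sum; intro p _
      apply HasDerivAt.fun_sum; intro q _
      apply HasDerivAt.fun_sum; intro r _
      have h1 := (givens_hasDerivAt hij p a θ).const_mul (W p q r)
      have h2 := givens_hasDerivAt hij q b θ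
      have h3 := givens_hasDerivAt hij r c θ
      refine ((h1.fun_mul h2).fun_mul h3).congr_deriv ?_
      rw [← hra, ← hrb, ← hrc, ← ha', ← hb', ← hc']
      ring
    convert H using 1
    rw [hT θ a' b c, hT θ a b' c, hT θ a b c']
    simp only [Finset.mul_sum, ← Finset.sum_add_distrib]
  -- specialized derivatives
  have hp : ∀ θ, HasDerivAt (fun θ => T θ i i i) (3 * T θ i i j) θ := by
    intro θ
    have H := key θ i i i
    simp only [if_pos rfl, ite_true] at H
    convert H using 1
    rw [show T θ j i i = T θ i i j from (Ts1 θ j i i).trans (Ts2 θ i j i),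
        show T θ i j i = T θ i i j from Ts2 θ i j i]
    ring
  have hq : ∀ θ, HasDerivAt (fun θ => T θ i i j) (2 * T θ i j j - T θ i i i) θ := by
    intro θ
    have H := key θ i i j
    simp only [if_pos rfl, ite_true, if_neg hji] at H
    convert H using 1
    rw [show T θ j i j = T θ i j j from Ts1 θ j i j]
    ring
  have hr : ∀ θ, HasDerivAt (fun θ => T θ i j j) (T θ j j j - 2 * T θ i i j) θ := by
    intro θ
    have H := key θ i j j
    simp only [if_pos rfl, ite_true, if_neg hji] at H
    convert H using 1
    rw [show T θ i j i = T θ i i j from Ts2 θ i j i]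
    ring
  have hs : ∀ θ, HasDerivAt (fun θ => T θ j j j) (-(3 * T θ i j j)) θ := by
    intro θ
    have H := key θ j j j
    simp only [if_pos rfl, ite_true, if_neg hji] at H
    convert H using 1
    rw [show T θ j i j = T θ i j j from Ts1 θ j i j,
        show T θ j j i = T θ i j j from (Ts2 θ j j i).trans (Ts1 θ j i j)]
    ring
  -- first derivative of h
  have hd : ∀ θ, HasDerivAt h (6 * (T θ i i i * T θ i i j - T θ i j j * T θ j j j)) θ := by
    intro θ
    have hfun : h = fun θ => ∑ s, (T θ s s s) ^ 2 := funext hh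
    rw [hfun]
    have H : HasDerivAt (fun θ => ∑ s, (T θ s s s) ^ 2)
        (∑ s : Fin n, (if s = i then 6 * (T θ i i i * T θ i i j)
          else if s = j then -(6 * (T θ i j j * T θ j j j)) else 0)) θ := by
      apply HasDerivAt.fun_sum
      intro s _
      by_cases hsi : s = i
      · subst hsi
        simp only [if_pos rfl, ite_true]
        refine ((hp θ).fun_pow 2).congr_deriv ?_
        ring
      by_cases hsj : s = j
      · subst hsj
        simp only [if_neg hsi, if_pos rfl, ite_true]
        refine ((hs θ).fun_pow 2).congr_deriv ?_
        ring
      · simp only [if_neg hsi, if_neg hsj]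
        have H0 := key θ s s s
        simp only [if_neg hsi, if_neg hsj] at H0
        refine (H0.fun_pow 2).congr_deriv ?_
        ring
    convert H using 1
    have e : ∀ s : Fin n, (if s = i then 6 * (T θ i i i * T θ i i j)
        else if s = j then -(6 * (T θ i j j * T θ j j j)) else 0)
        = (if s = i then 6 * (T θ i i i * T θ i i j) else 0)
          + (if s = j then -(6 * (T θ i j j * T θ j j j)) else 0) := by
      intro s
      by_cases h1 : s = i
      · subst h1
        simp [hij]
      · by_cases h2 : s = j <;> simp [h1, h2, hji]
    rw [Finset.sum_congr rfl fun s _ => e s, Finset.sum_add_distrib,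
        Finset.sum_ite_eq' Finset.univ i, Finset.sum_ite_eq' Finset.univ j]
    simp only [Finset.mem_univ, if_pos]
    ring
  refine ⟨(hd θ).deriv, ?_⟩
  have hDh : deriv h = fun θ => 6 * (T θ i i i * T θ i i j - T θ i j j * T θ j j j) :=
    funext fun θ => (hd θ).deriv
  rw [hDh]
  have H2 := ((((hp θ).fun_mul (hq θ)).fun_sub ((hr θ).fun_mul (hs θ))).const_mul (6 : ℝ))
  rw [H2.deriv]
  ring
end

section
/- Let n ≥ 2 and let W be a real symmetric n×n matrix. For θ ∈ ℝ, let T(θ) := G(1,2,θ)ᵀ W G(1,2,θ), and define h(θ) := Σ_{j=1}^n (T_{jj}(θ))². Then for every θ ∈ ℝ, writing T = T(θ): h'(θ) = 4 (T_{11} T_{12} − T_{12} T_{22}) and h''(θ) = −4 (T_{11}² + T_{22}² − 2 T_{11} T_{22} − 4 T_{12}²). -/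
open Matrix Real Filter Set

attribute [local instance] Matrix.frobeniusNormedAddCommGroup Matrix.frobeniusNormedSpace

noncomputable def trigQ (A B C : ℝ) : ℝ → ℝ :=
  fun t => Real.cos t^2*A + 2*Real.cos t*Real.sin t*C + Real.sin t^2*B

lemma trigQ_hasDeriv (A B C t : ℝ) :
    HasDerivAt (trigQ A B C) (trigQ (2*C) (-(2*C)) (B-A) t) t := by
  have hc := Real.hasDerivAt_cos t
  have hs := Real.hasDerivAt_sin t
  have h1 := (((hc.pow 2).mul_const A).add
    (((hc.mul hs).const_mul 2).mul_const C)).add ((hs.pow 2).mul_const B)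
  have hfe : trigQ A B C
      = fun x => Real.cos x^2*A + 2*(Real.cos x*Real.sin x)*C + Real.sin x^2*B := by
    funext x; simp only [trigQ]; ring
  rw [hfe]
  refine h1.congr_deriv ?_
  simp only [trigQ]; push_cast; ring

theorem stmt_7 {n : ℕ} (hn : 2 ≤ n) (W : Matrix (Fin n) (Fin n) ℝ) (hW : Wᵀ = W)
    (i j : Fin n) (hi : (i : ℕ) = 0) (hj : (j : ℕ) = 1)
    (T : ℝ → Matrix (Fin n) (Fin n) ℝ)
    (hT : ∀ θ, T θ = (givens i j θ)ᵀ * W * givens i j θ)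
    (h : ℝ → ℝ) (hh : ∀ θ, h θ = ∑ s, (T θ s s) ^ 2) (θ : ℝ) :
    deriv h θ = 4 * (T θ i i * T θ i j - T θ i j * T θ j j) ∧
    deriv (deriv h) θ =
      -4 * ((T θ i i) ^ 2 + (T θ j j) ^ 2 - 2 * T θ i i * T θ j j - 4 * (T θ i j) ^ 2) := by
  have hij : i ≠ j := by
    intro e; rw [← Fin.val_eq_val, hi, hj] at e; omega
  have hW' : W j i = W i j := by conv_lhs => rw [← hW, Matrix.transpose_apply]
  have gi : ∀ t p, givens i j t p i
      = (if p = i then Real.cos t else 0) + (if p = j then Real.sin t else 0) := by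
    intro t p; simp only [givens, Matrix.of_apply]
    rcases eq_or_ne p i with rfl | hpi
    · simp [hij, hij.symm]
    · rcases eq_or_ne p j with rfl | hpj
      · simp [hij, hij.symm]
      · simp [hij, hij.symm, hpi, hpj]
  have gj : ∀ t p, givens i j t p j
      = (if p = i then -Real.sin t else 0) + (if p = j then Real.cos t else 0) := by
    intro t p; simp only [givens, Matrix.of_apply]
    rcases eq_or_ne p i with rfl | hpi
    · simp [hij, hij.symm]
    · rcases eq_or_ne p j with rfl | hpj
      · simp [hij, hij.symm]
      · simp [hij, hij.symm, hpi, hpj]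
  have gs : ∀ t (s : Fin n), s ≠ i → s ≠ j → ∀ p, givens i j t p s = if p = s then 1 else 0 := by
    intro t s hsi hsj p; simp only [givens, Matrix.of_apply]
    simp [hsi, hsj]
  -- entries
  have hTii : ∀ t, T t i i = trigQ (W i i) (W j j) (W i j) t := by
    intro t; rw [hT]
    simp only [trigQ, Matrix.mul_apply, Matrix.transpose_apply, gi, add_mul, mul_add,
      Finset.sum_add_distrib, ite_mul, mul_ite, zero_mul, mul_zero,
      Finset.sum_ite_eq', Finset.mem_univ, if_true, Finset.sum_mul, Finset.mul_sum]
    rw [hW']; ring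
  have hTjj : ∀ t, T t j j = trigQ (W j j) (W i i) (-(W i j)) t := by
    intro t; rw [hT]
    simp only [trigQ, Matrix.mul_apply, Matrix.transpose_apply, gj, add_mul, mul_add,
      Finset.sum_add_distrib, ite_mul, mul_ite, zero_mul, mul_zero,
      Finset.sum_ite_eq', Finset.mem_univ, if_true, Finset.sum_mul, Finset.mul_sum]
    rw [hW']; ring
  have hTij : ∀ t, T t i j = Real.cos t^2*W i j - Real.sin t^2*W i j
      + Real.cos t*Real.sin t*(W j j - W i i) := by
    intro t; rw [hT]
    simp only [Matrix.mul_apply, Matrix.transpose_apply, gi, gj, add_mul, mul_add,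
      Finset.sum_add_distrib, ite_mul, mul_ite, zero_mul, mul_zero,
      Finset.sum_ite_eq', Finset.mem_univ, if_true, Finset.sum_mul, Finset.mul_sum]
    rw [hW']; ring
  have hTss : ∀ t (s : Fin n), s ≠ i → s ≠ j → T t s s = W s s := by
    intro t s hsi hsj; rw [hT]
    simp only [Matrix.mul_apply, Matrix.transpose_apply, gs t s hsi hsj, ite_mul, mul_ite,
      zero_mul, mul_zero, one_mul, mul_one, Finset.sum_ite_eq', Finset.mem_univ, if_true]
  -- split h
  set U := trigQ (W i i) (W j j) (W i j) with hU
  set V := trigQ (W j j) (W i i) (-(W i j)) with hV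
  set C : ℝ := ∑ s ∈ (Finset.univ.erase i).erase j, (W s s)^2 with hC
  have hhF : h = fun t => U t * U t + V t * V t + C := by
    funext t
    rw [hh, ← Finset.add_sum_erase _ _ (Finset.mem_univ i),
      ← Finset.add_sum_erase _ _ (Finset.mem_erase.mpr ⟨hij.symm, Finset.mem_univ j⟩)]
    rw [Finset.sum_congr rfl (fun s hs => by
      rw [hTss t s (Finset.mem_erase.mp (Finset.mem_erase.mp hs).2).1
        (Finset.mem_erase.mp hs).1])]
    rw [hTii, hTjj]
    ring
  set DU := trigQ (2*(W i j)) (-(2*(W i j))) (W j j - W i i) with hDU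
  set DV := trigQ (2*(-(W i j))) (-(2*(-(W i j)))) (W i i - W j j) with hDV
  have Hh : ∀ t, HasDerivAt h (DU t * U t + U t * DU t + (DV t * V t + V t * DV t)) t := by
    intro t
    rw [hhF]
    exact (((trigQ_hasDeriv _ _ _ t).mul (trigQ_hasDeriv _ _ _ t)).add
      ((trigQ_hasDeriv _ _ _ t).mul (trigQ_hasDeriv _ _ _ t))).add_const C
  have hD1 : deriv h = fun t => DU t * U t + U t * DU t + (DV t * V t + V t * DV t) :=
    funext fun t => (Hh t).deriv
  set DDU := trigQ (2*(W j j - W i i)) (-(2*(W j j - W i i))) (-(2*(W i j)) - 2*(W i j)) with hDDU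
  set DDV := trigQ (2*(W i i - W j j)) (-(2*(W i i - W j j)))
    (-(2*(-(W i j))) - 2*(-(W i j))) with hDDV
  have Hh2 : HasDerivAt (fun t => DU t * U t + U t * DU t + (DV t * V t + V t * DV t))
      ((DDU θ * U θ + DU θ * DU θ + (DU θ * DU θ + U θ * DDU θ))
        + (DDV θ * V θ + DV θ * DV θ + (DV θ * DV θ + V θ * DDV θ))) θ :=
    (((trigQ_hasDeriv _ _ _ θ).mul (trigQ_hasDeriv _ _ _ θ)).add
      ((trigQ_hasDeriv _ _ _ θ).mul (trigQ_hasDeriv _ _ _ θ))).add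
      (((trigQ_hasDeriv _ _ _ θ).mul (trigQ_hasDeriv _ _ _ θ)).add
        ((trigQ_hasDeriv _ _ _ θ).mul (trigQ_hasDeriv _ _ _ θ)))
  constructor
  · rw [(Hh θ).deriv, hTii, hTjj, hTij, hU, hV, hDU, hDV]
    simp only [trigQ]; ring
  · rw [hD1, Hh2.deriv, hTii, hTjj, hTij, hU, hV, hDU, hDV, hDDU, hDDV]
    simp only [trigQ]; ring
end

section
/- Let n ≥ 2 and let A^{(1)},…,A^{(m)} ∈ ℝ^{n×n×n} be symmetric third-order tensors. Fix Q ∈ SO(n) and 1 ≤ i < j ≤ n, and define h(θ) := Σ_{ℓ=1}^m Σ_{s=1}^n (W^{(ℓ)}_{sss}(Q G(i,j,θ)))², where W^{(ℓ)}_{abc}(U) = Σ_{p,q,r} A^{(ℓ)}_{pqr} U_{pa} U_{qb} U_{rc}, and τ(x) := h(arctan x) for x ∈ ℝ. Then for all x ∈ ℝ: τ(x) − τ(0) = [h'(0)(x − x³) + (1/2) h''(0) x²] / (1 + x²)², and τ'(x) = [h'(0)(1 − 6x² + x⁴) + h''(0)(x − x³)] / (1 + x²)³. -/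
open Matrix Real Filter Set

attribute [local instance] Matrix.frobeniusNormedAddCommGroup Matrix.frobeniusNormedSpace

lemma sum_mul_if {n : ℕ} {i j : Fin n} (hij : i ≠ j) (f : Fin n → ℝ) (a b : ℝ) :
    ∑ k, f k * (if k = i then a else if k = j then b else 0) = f i * a + f j * b := by
  have h : ∀ k, f k * (if k = i then a else if k = j then b else 0) =
      (if k = i then f k * a else 0) + (if k = j then f k * b else 0) := by
    intro k; split_ifs with h1 h2 <;> simp_all
  simp [h, Finset.sum_add_distrib]

lemma mul_givens_apply {n : ℕ} {i j : Fin n} (hij : i ≠ j) (Q : Matrix (Fin n) (Fin n) ℝ)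
    (θ : ℝ) (p s : Fin n) :
    (Q * givens i j θ) p s =
      if s = i then Q p i * Real.cos θ + Q p j * Real.sin θ
      else if s = j then Q p i * (-Real.sin θ) + Q p j * Real.cos θ
      else Q p s := by
  have hji : j ≠ i := hij.symm
  rw [Matrix.mul_apply]
  by_cases h1 : s = i
  · rw [if_pos h1, h1]
    have hg : ∀ k, givens i j θ k i = (if k = i then Real.cos θ else if k = j then Real.sin θ else 0) := by
      intro k
      by_cases hki : k = i <;> by_cases hkj : k = j <;> simp [givens, hki, hkj, hij, hji]
    simp only [hg]
    rw [sum_mul_if hij]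
  · rw [if_neg h1]
    by_cases h2 : s = j
    · rw [if_pos h2, h2]
      have hg : ∀ k, givens i j θ k j = (if k = i then -Real.sin θ else if k = j then Real.cos θ else 0) := by
        intro k
        by_cases hki : k = i <;> by_cases hkj : k = j <;> simp [givens, hki, hkj, hij, hji]
      simp only [hg]
      rw [sum_mul_if hij]
    · rw [if_neg h2]
      have hg : ∀ k, givens i j θ k s = (if k = s then 1 else 0) := by
        intro k
        by_cases hki : k = i <;> by_cases hkj : k = j <;>
          simp [givens, hki, hkj, h1, h2, Ne.symm h1, Ne.symm h2, hij, hji]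
      simp only [hg, mul_ite, mul_one, mul_zero]
      rw [Finset.sum_ite_eq' Finset.univ s (fun k => Q p k)]
      simp

lemma sum_split {n : ℕ} {i j : Fin n} (hij : i ≠ j) (f : Fin n → ℝ) :
    ∑ s, f s = f i + f j + ∑ s ∈ Finset.univ \ ({i, j} : Finset (Fin n)), f s := by
  rw [← Finset.sum_sdiff (Finset.subset_univ ({i, j} : Finset (Fin n))), Finset.sum_pair hij]
  ring

lemma triple_expand {n : ℕ} (B : Fin n → Fin n → Fin n → ℝ) (U V : Fin n → ℝ) (c s : ℝ) :
    (∑ p, ∑ q, ∑ r, B p q r * (U p * c + V p * s) * (U q * c + V q * s) * (U r * c + V r * s))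
    = c^3 * (∑ p, ∑ q, ∑ r, B p q r * U p * U q * U r)
    + c^2*s * (∑ p, ∑ q, ∑ r, B p q r * (U p * U q * V r + U p * V q * U r + V p * U q * U r))
    + c*s^2 * (∑ p, ∑ q, ∑ r, B p q r * (U p * V q * V r + V p * U q * V r + V p * V q * U r))
    + s^3 * (∑ p, ∑ q, ∑ r, B p q r * V p * V q * V r) := by
  simp only [Finset.mul_sum, ← Finset.sum_add_distrib]
  refine Finset.sum_congr rfl fun p _ => ?_
  refine Finset.sum_congr rfl fun q _ => ?_
  refine Finset.sum_congr rfl fun r _ => ?_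
  ring

lemma column_identity (t1 t2 t3 t4 c s : ℝ) (hcs : c^2+s^2 = 1) :
  (c^3*t1 + c^2*s*t2 + c*s^2*t3 + s^3*t4)^2 + (c^3*t4 - c^2*s*t3 + c*s^2*t2 - s^3*t1)^2
  = (5/8*t1^2 + 1/8*t2^2 + 1/8*t3^2 + 5/8*t4^2 + 1/4*t2*t4 + 1/4*t1*t3)
    + (1/2*t1*t2 - 1/2*t3*t4) * (4*c^3*s - 4*c*s^3)
    + (3/8*t1^2 - 1/8*t2^2 - 1/8*t3^2 + 3/8*t4^2 - 1/4*t2*t4 - 1/4*t1*t3) * (c^4 - 6*c^2*s^2 + s^4) := by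
  linear_combination (5/8*t4^2 + 5/8*t4^2*s^2 + t4^2*s^4 + 5/8*t4^2*c^2 - t4^2*c^2*s^2 + t4^2*c^4 + 2*t3*t4*c*s^3 - 2*t3*t4*c^3*s + 1/8*t3^2 + 1/8*t3^2*s^2 + 1/8*t3^2*c^2 + t3^2*c^2*s^2 + 1/4*t2*t4 + 1/4*t2*t4*s^2 + 1/4*t2*t4*c^2 + 2*t2*t4*c^2*s^2 + 1/8*t2^2 + 1/8*t2^2*s^2 + 1/8*t2^2*c^2 + t2^2*c^2*s^2 + 1/4*t1*t3 + 1/4*t1*t3*s^2 + 1/4*t1*t3*c^2 + 2*t1*t3*c^2*s^2 - 2*t1*t2*c*s^3 + 2*t1*t2*c^3*s + 5/8*t1^2 + 5/8*t1^2*s^2 + t1^2*s^4 + 5/8*t1^2*c^2 - t1^2*c^2*s^2 + t1^2*c^4) * hcs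

lemma sin4_expand (θ : ℝ) : Real.sin (4*θ) = 4*(Real.cos θ)^3*Real.sin θ - 4*Real.cos θ*(Real.sin θ)^3 := by
  rw [show (4:ℝ)*θ = 2*(2*θ) by ring, Real.sin_two_mul, Real.sin_two_mul, Real.cos_two_mul]
  linear_combination (4*Real.sin θ*Real.cos θ) * Real.sin_sq_add_cos_sq θ

lemma cos4_expand (θ : ℝ) : Real.cos (4*θ) = (Real.cos θ)^4 - 6*(Real.cos θ)^2*(Real.sin θ)^2 + (Real.sin θ)^4 := by
  rw [show (4:ℝ)*θ = 2*(2*θ) by ring, Real.cos_two_mul, Real.cos_two_mul]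
  linear_combination (7*(Real.cos θ)^2 - (Real.sin θ)^2 - 1) * Real.sin_sq_add_cos_sq θ


lemma hd_sin4 (θ : ℝ) : HasDerivAt (fun t => Real.sin (4*t)) (4 * Real.cos (4*θ)) θ := by
  have := (Real.hasDerivAt_sin (4*θ)).comp θ ((hasDerivAt_id θ).const_mul 4)
  simpa [Function.comp_def, mul_comm] using this

lemma hd_cos4 (θ : ℝ) : HasDerivAt (fun t => Real.cos (4*t)) (-4 * Real.sin (4*θ)) θ := by
  have := (Real.hasDerivAt_cos (4*θ)).comp θ ((hasDerivAt_id θ).const_mul 4)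
  have h2 : HasDerivAt (fun t => Real.cos (4*t)) (-Real.sin (4*θ) * (4*1)) θ := by
    simpa [Function.comp_def, mul_comm] using this
  convert h2 using 1; ring

lemma hd_h (E P Q : ℝ) (h : ℝ → ℝ)
    (hform : ∀ θ, h θ = E + P * Real.sin (4*θ) + Q * Real.cos (4*θ)) (θ : ℝ) :
    HasDerivAt h (P * (4 * Real.cos (4*θ)) + Q * (-4 * Real.sin (4*θ))) θ := by
  have heq : h = fun t => E + P * Real.sin (4*t) + Q * Real.cos (4*t) := funext hform
  rw [heq]
  exact (((hd_sin4 θ).const_mul P).const_add E).add ((hd_cos4 θ).const_mul Q)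

lemma sin2_arctan (x : ℝ) : Real.sin (2 * Real.arctan x) = 2*x/(1+x^2) := by
  have hsq : Real.sqrt (1 + x^2) * Real.sqrt (1 + x^2) = 1 + x^2 :=
    Real.mul_self_sqrt (by positivity)
  rw [Real.sin_two_mul, Real.sin_arctan, Real.cos_arctan]
  rw [mul_assoc, div_mul_div_comm, hsq]
  ring

lemma cos2_arctan (x : ℝ) : Real.cos (2 * Real.arctan x) = (1-x^2)/(1+x^2) := by
  have hx : (1:ℝ) + x^2 ≠ 0 := by positivity
  have hsq : Real.sqrt (1 + x^2) * Real.sqrt (1 + x^2) = 1 + x^2 :=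
    Real.mul_self_sqrt (by positivity)
  rw [Real.cos_two_mul, Real.cos_arctan, div_pow, one_pow, sq, hsq]
  field_simp
  ring

lemma sin4_arctan (x : ℝ) : Real.sin (4 * Real.arctan x) = 4*x*(1-x^2) / (1+x^2)^2 := by
  have hx : (1:ℝ) + x^2 ≠ 0 := by positivity
  rw [show (4:ℝ) * Real.arctan x = 2*(2*Real.arctan x) by ring, Real.sin_two_mul,
    sin2_arctan, cos2_arctan]
  field_simp; ring

lemma cos4_arctan (x : ℝ) : Real.cos (4 * Real.arctan x) = (1 - 6*x^2 + x^4) / (1+x^2)^2 := by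
  have hx : (1:ℝ) + x^2 ≠ 0 := by positivity
  rw [show (4:ℝ) * Real.arctan x = 2*(2*Real.arctan x) by ring, Real.cos_two_mul,
    cos2_arctan]
  field_simp; ring

lemma master (h τ : ℝ → ℝ) (E P Q : ℝ)
    (hform : ∀ θ, h θ = E + P * Real.sin (4*θ) + Q * Real.cos (4*θ))
    (hτ : ∀ x, τ x = h (Real.arctan x)) (x : ℝ) :
    τ x - τ 0 = (deriv h 0 * (x - x ^ 3) + (1 / 2) * deriv (deriv h) 0 * x ^ 2) / (1 + x ^ 2) ^ 2 ∧
    deriv τ x = (deriv h 0 * (1 - 6 * x ^ 2 + x ^ 4) + deriv (deriv h) 0 * (x - x ^ 3)) / (1 + x ^ 2) ^ 3 := by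
  have hx : (1:ℝ) + x^2 ≠ 0 := by positivity
  have hderiv : deriv h = fun θ => P * (4 * Real.cos (4*θ)) + Q * (-4 * Real.sin (4*θ)) :=
    funext fun θ => (hd_h E P Q h hform θ).deriv
  have hdh0 : deriv h 0 = 4 * P := by rw [hderiv]; norm_num; ring
  have hd2 : ∀ θ, HasDerivAt (deriv h)
      (P * (4 * (-4 * Real.sin (4*θ))) + Q * (-4 * (4 * Real.cos (4*θ)))) θ := by
    intro θ; rw [hderiv]
    exact (((hd_cos4 θ).const_mul 4).const_mul P).add ((((hd_sin4 θ).const_mul (-4)).const_mul Q))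
  have hddh0 : deriv (deriv h) 0 = -16 * Q := by
    rw [(hd2 0).deriv]; norm_num; ring
  have hτ0 : τ 0 = E + Q := by
    rw [hτ 0, hform, Real.arctan_zero]; norm_num
  constructor
  · rw [hτ 0, hτ x, hform, hform, Real.arctan_zero, hdh0, hddh0, sin4_arctan, cos4_arctan]
    norm_num
    field_simp
    ring
  · have hdτ : HasDerivAt τ
        ((P * (4 * Real.cos (4*Real.arctan x)) + Q * (-4 * Real.sin (4*Real.arctan x))) * (1/(1+x^2))) x := by
      have hcomp := (hd_h E P Q (fun a => E + P * Real.sin (4*a) + Q * Real.cos (4*a))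
        (fun _ => rfl) (Real.arctan x)).comp x (Real.hasDerivAt_arctan x)
      have heq : τ = (fun a => E + P * Real.sin (4*a) + Q * Real.cos (4*a)) ∘ Real.arctan :=
        funext fun y => (hτ y).trans (hform _)
      rw [heq]; exact hcomp
    rw [hdτ.deriv, hdh0, hddh0, sin4_arctan, cos4_arctan]
    field_simp
    ring

theorem stmt_8 {n m : ℕ} (hn : 2 ≤ n) (A : Fin m → (Fin n → Fin n → Fin n → ℝ))
    (hsym1 : ∀ ℓ p q r, A ℓ p q r = A ℓ q p r)
    (hsym2 : ∀ ℓ p q r, A ℓ p q r = A ℓ p r q)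
    (Q : Matrix (Fin n) (Fin n) ℝ) (hQ : Q ∈ SOn n)
    (i j : Fin n) (hij : i < j)
    (h : ℝ → ℝ)
    (hh : ∀ θ, h θ = ∑ ℓ : Fin m, ∑ s, (∑ p, ∑ q, ∑ r, A ℓ p q r *
      (Q * givens i j θ) p s * (Q * givens i j θ) q s * (Q * givens i j θ) r s) ^ 2)
    (τ : ℝ → ℝ) (hτ : ∀ x, τ x = h (Real.arctan x)) (x : ℝ) :
    τ x - τ 0 =
      (deriv h 0 * (x - x ^ 3) + (1 / 2) * deriv (deriv h) 0 * x ^ 2) / (1 + x ^ 2) ^ 2 ∧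
    deriv τ x =
      (deriv h 0 * (1 - 6 * x ^ 2 + x ^ 4) + deriv (deriv h) 0 * (x - x ^ 3)) / (1 + x ^ 2) ^ 3 := by
  have hij' : i ≠ j := ne_of_lt hij
  obtain ⟨E, P, Qc, hform⟩ : ∃ E P Qc : ℝ, ∀ θ, h θ =
      E + P * Real.sin (4*θ) + Qc * Real.cos (4*θ) := by
    classical
    set T1 : Fin m → ℝ := fun ℓ => ∑ p, ∑ q, ∑ r, A ℓ p q r * Q p i * Q q i * Q r i with hT1
    set T2 : Fin m → ℝ := fun ℓ => ∑ p, ∑ q, ∑ r, A ℓ p q r *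
      (Q p i * Q q i * Q r j + Q p i * Q q j * Q r i + Q p j * Q q i * Q r i) with hT2
    set T3 : Fin m → ℝ := fun ℓ => ∑ p, ∑ q, ∑ r, A ℓ p q r *
      (Q p i * Q q j * Q r j + Q p j * Q q i * Q r j + Q p j * Q q j * Q r i) with hT3
    set T4 : Fin m → ℝ := fun ℓ => ∑ p, ∑ q, ∑ r, A ℓ p q r * Q p j * Q q j * Q r j with hT4
    set C : Fin m → ℝ := fun ℓ => ∑ s' ∈ Finset.univ \ ({i, j} : Finset (Fin n)),
      (∑ p, ∑ q, ∑ r, A ℓ p q r * Q p s' * Q q s' * Q r s')^2 with hC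
    refine ⟨∑ ℓ, (C ℓ + (5/8*(T1 ℓ)^2 + 1/8*(T2 ℓ)^2 + 1/8*(T3 ℓ)^2 + 5/8*(T4 ℓ)^2
        + 1/4*(T2 ℓ)*(T4 ℓ) + 1/4*(T1 ℓ)*(T3 ℓ))),
      ∑ ℓ, (1/2*(T1 ℓ)*(T2 ℓ) - 1/2*(T3 ℓ)*(T4 ℓ)),
      ∑ ℓ, (3/8*(T1 ℓ)^2 - 1/8*(T2 ℓ)^2 - 1/8*(T3 ℓ)^2 + 3/8*(T4 ℓ)^2
        - 1/4*(T2 ℓ)*(T4 ℓ) - 1/4*(T1 ℓ)*(T3 ℓ)), fun θ => ?_⟩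
    rw [hh θ, Finset.sum_mul, Finset.sum_mul, ← Finset.sum_add_distrib,
      ← Finset.sum_add_distrib]
    refine Finset.sum_congr rfl fun ℓ _ => ?_
    rw [sum_split hij' (fun s' => (∑ p, ∑ q, ∑ r, A ℓ p q r *
      (Q * givens i j θ) p s' * (Q * givens i j θ) q s' * (Q * givens i j θ) r s')^2)]
    have hWi : (∑ p, ∑ q, ∑ r, A ℓ p q r * (Q * givens i j θ) p i *
        (Q * givens i j θ) q i * (Q * givens i j θ) r i)
        = (Real.cos θ)^3 * T1 ℓ + (Real.cos θ)^2*(Real.sin θ) * T2 ℓ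
          + (Real.cos θ)*(Real.sin θ)^2 * T3 ℓ + (Real.sin θ)^3 * T4 ℓ := by
      simp only [mul_givens_apply hij' Q θ, if_pos rfl]
      exact triple_expand (A ℓ) (fun p => Q p i) (fun p => Q p j) (Real.cos θ) (Real.sin θ)
    have hWj : (∑ p, ∑ q, ∑ r, A ℓ p q r * (Q * givens i j θ) p j *
        (Q * givens i j θ) q j * (Q * givens i j θ) r j)
        = (-Real.sin θ)^3 * T1 ℓ + (-Real.sin θ)^2*(Real.cos θ) * T2 ℓ
          + (-Real.sin θ)*(Real.cos θ)^2 * T3 ℓ + (Real.cos θ)^3 * T4 ℓ := by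
      simp only [mul_givens_apply hij' Q θ, if_neg hij'.symm, if_pos rfl]
      exact triple_expand (A ℓ) (fun p => Q p i) (fun p => Q p j) (-Real.sin θ) (Real.cos θ)
    have hCℓ : (∑ s' ∈ Finset.univ \ ({i, j} : Finset (Fin n)),
        (∑ p, ∑ q, ∑ r, A ℓ p q r * (Q * givens i j θ) p s' *
          (Q * givens i j θ) q s' * (Q * givens i j θ) r s')^2) = C ℓ := by
      refine Finset.sum_congr rfl fun s' hs' => ?_
      obtain ⟨-, hs2⟩ := Finset.mem_sdiff.mp hs'
      simp only [Finset.mem_insert, Finset.mem_singleton, not_or] at hs2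
      simp only [mul_givens_apply hij' Q θ, if_neg hs2.1, if_neg hs2.2]
    rw [hWi, hWj, hCℓ, sin4_expand, cos4_expand]
    linear_combination column_identity (T1 ℓ) (T2 ℓ) (T3 ℓ) (T4 ℓ) (Real.cos θ) (Real.sin θ)
      (by linear_combination Real.sin_sq_add_cos_sq θ)
  exact master h τ E P Qc hform hτ x
end

section
/- Let A, B ∈ ℝ and let τ : ℝ → ℝ be the function τ(x) = C + [A(x − x³) + (1/2) B x²] / (1 + x²)² for some constant C ∈ ℝ. If x* ∈ (−1, 1), x* ≠ 0, and τ'(x*) = 0, then τ(x*) − τ(0) = A x* / (2 (1 − x*²)). -/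
open Matrix Real Filter Set

attribute [local instance] Matrix.frobeniusNormedAddCommGroup Matrix.frobeniusNormedSpace

theorem stmt_10 (A B C : ℝ) (τ : ℝ → ℝ)
    (hτ : ∀ x : ℝ, τ x = C + (A * (x - x ^ 3) + (1 / 2) * B * x ^ 2) / (1 + x ^ 2) ^ 2)
    (x : ℝ) (hx1 : x ∈ Set.Ioo (-1 : ℝ) 1) (hx0 : x ≠ 0) (hcrit : deriv τ x = 0) :
    τ x - τ 0 = A * x / (2 * (1 - x ^ 2)) := by
  have hD : (1 + x ^ 2 : ℝ) ≠ 0 := by positivity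
  have hq : HasDerivAt (fun y : ℝ => (1 + y ^ 2) ^ 2) (2 * (1 + x ^ 2) ^ 1 * (2 * x ^ 1)) x :=
    ((hasDerivAt_pow 2 x).const_add 1).pow 2
  have hp : HasDerivAt (fun y : ℝ => A * (y - y ^ 3) + (1 / 2) * B * y ^ 2)
      (A * (1 - 3 * x ^ 2) + (1 / 2) * B * (2 * x)) x := by
    have h1 := ((hasDerivAt_id x).sub (hasDerivAt_pow 3 x)).const_mul A
    have h2 := (hasDerivAt_pow 2 x).const_mul ((1 / 2) * B)
    exact (h1.add h2).congr_deriv (by ring)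
  have hqx : ((1 + x ^ 2) ^ 2 : ℝ) ≠ 0 := pow_ne_zero _ hD
  have hτeq : τ = fun y : ℝ =>
      C + (A * (y - y ^ 3) + (1 / 2) * B * y ^ 2) / (1 + y ^ 2) ^ 2 := funext hτ
  have hd : HasDerivAt τ
      (((A * (1 - 3 * x ^ 2) + (1 / 2) * B * (2 * x)) * (1 + x ^ 2) ^ 2 -
        (A * (x - x ^ 3) + (1 / 2) * B * x ^ 2) * (2 * (1 + x ^ 2) ^ 1 * (2 * x ^ 1))) /
        ((1 + x ^ 2) ^ 2) ^ 2) x := by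
    rw [hτeq]
    exact (hp.div hq hqx).const_add C
  have hnum : (A * (1 - 3 * x ^ 2) + (1 / 2) * B * (2 * x)) * (1 + x ^ 2) ^ 2 -
      (A * (x - x ^ 3) + (1 / 2) * B * x ^ 2) * (2 * (1 + x ^ 2) ^ 1 * (2 * x ^ 1)) = 0 := by
    have := hd.deriv
    rw [hcrit] at this
    have h4 : (((1 + x ^ 2) ^ 2 : ℝ) ^ 2) ≠ 0 := pow_ne_zero _ hqx
    field_simp at this
    linear_combination (-(1 + x ^ 2)) * this
  have hx2 : (1 - x ^ 2 : ℝ) ≠ 0 := by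
    have h1 := hx1.1; have h2 := hx1.2; nlinarith
  rw [hτ x, hτ 0]
  have h0 : ((0:ℝ) - 0 ^ 3) = 0 := by ring
  have hfact : (1 + x ^ 2) * (A * (1 - 6 * x ^ 2 + x ^ 4) + B * x * (1 - x ^ 2)) = 0 := by
    linear_combination hnum
  have hnum2 : A * (1 - 6 * x ^ 2 + x ^ 4) + B * x * (1 - x ^ 2) = 0 :=
    (mul_eq_zero.mp hfact).resolve_left hD
  field_simp
  linear_combination x * hnum2
end

section
/- Let n ≥ 1, d ≥ 1, and let A : (Fin d → Fin n) → ℝ be a symmetric d-th order tensor, i.e., A(p ∘ σ) = A(p) for every p : Fin d → Fin n and every permutation σ of Fin d. For a real n×n matrix Q, define W(Q)(i₁,…,i_d) := Σ_{p₁,…,p_d} A(p₁,…,p_d) Q_{p₁ i₁} ⋯ Q_{p_d i_d} and f(Q) := Σ_{j=1}^n (W(Q)(j,…,j))². Then for every Q and every pair of indices (i,j), the partial derivative of f with respect to the (i,j) entry of Q equals 2d · W(Q)(j,…,j) · V(Q)(i, j, …, j), where V(Q)(i, j, …, j) := Σ_{p₂,…,p_d} A(i, p₂, …, p_d) Q_{p₂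 j} ⋯ Q_{p_d j}. -/
open Matrix Real Filter Set

attribute [local instance] Matrix.frobeniusNormedAddCommGroup Matrix.frobeniusNormedSpace

lemma prod_erase_eq_succAbove {d : ℕ} (k : Fin (d+1)) (g : Fin (d+1) → ℝ) :
    ∏ m ∈ Finset.univ.erase k, g m = ∏ m : Fin d, g (k.succAbove m) := by
  rw [show Finset.univ.erase k = Finset.image k.succAbove Finset.univ by
    ext x
    simp [Fin.exists_succAbove_eq_iff, ne_comm]]
  rw [Finset.prod_image (fun a _ b _ h => k.succAbove_right_injective h)]

def permCons {d : ℕ} (k : Fin (d+1)) : Equiv.Perm (Fin (d+1)) :=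
  (finSuccEquiv' (0 : Fin (d+1))).trans (finSuccEquiv' k).symm

lemma insertNth_comp_permCons {d n : ℕ} (k : Fin (d+1)) (x : Fin n) (r : Fin d → Fin n) :
    (Fin.insertNth k x r) ∘ (permCons k) = Fin.cons x r := by
  funext m
  refine Fin.cases ?_ (fun m => ?_) m
  · simp [permCons]
  · simp only [permCons, Function.comp_apply, Equiv.trans_apply, Fin.cons_succ]
    rw [← Fin.zero_succAbove, finSuccEquiv'_succAbove, finSuccEquiv'_symm_some,
      Fin.insertNth_apply_succAbove]

theorem stmt_14 {n d : ℕ} (hn : 1 ≤ n) (A : (Fin (d + 1) → Fin n) → ℝ)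
    (hsym : ∀ (p : Fin (d + 1) → Fin n) (σ : Equiv.Perm (Fin (d + 1))), A (p ∘ σ) = A p)
    (f : Matrix (Fin n) (Fin n) ℝ → ℝ)
    (hf : ∀ Q, f Q = ∑ j, (∑ p : Fin (d + 1) → Fin n, A p * ∏ k, Q (p k) j) ^ 2)
    (Q : Matrix (Fin n) (Fin n) ℝ) (i j : Fin n) :
    deriv (fun t : ℝ => f (Q + t • Matrix.single i j 1)) 0 =
      2 * ((d : ℝ) + 1) * (∑ p : Fin (d + 1) → Fin n, A p * ∏ k, Q (p k) j) *
        (∑ p : Fin d → Fin n, A (Fin.cons i p) * ∏ k, Q (p k) j) := by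
  classical
  set E := Matrix.single i j (1:ℝ) with hE
  set W : Fin n → ℝ := fun j' => ∑ p : Fin (d+1) → Fin n, A p * ∏ k, Q (p k) j' with hW
  set C : Fin n → ℝ := fun j' => ∑ p : Fin (d+1) → Fin n,
      A p * ∑ k, (∏ m ∈ Finset.univ.erase k, Q (p m) j') * E (p k) j' with hC
  have key : ∀ j' : Fin n, HasDerivAt
      (fun t : ℝ => (∑ p : Fin (d+1) → Fin n, A p * ∏ k, (Q (p k) j' + t * E (p k) j')) ^ 2)
      (2 * W j' * C j') 0 := by
    intro j'
    have hp : ∀ p : Fin (d+1) → Fin n, HasDerivAt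
        (fun t : ℝ => ∏ k, (Q (p k) j' + t * E (p k) j'))
        (∑ k, (∏ m ∈ Finset.univ.erase k, Q (p m) j') * E (p k) j') 0 := by
      intro p
      have := HasDerivAt.fun_finsetProd (u := (Finset.univ : Finset (Fin (d+1))))
        (f := fun k t => Q (p k) j' + t * E (p k) j') (f' := fun k => E (p k) j') (x := (0:ℝ))
        (fun k _ => ((hasDerivAt_mul_const (E (p k) j')).const_add _))
      simpa [smul_eq_mul, mul_comm] using this
    have hsum : HasDerivAt
        (fun t : ℝ => ∑ p : Fin (d+1) → Fin n, A p * ∏ k, (Q (p k) j' + t * E (p k) j'))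
        (C j') 0 := HasDerivAt.fun_sum (fun p _ => (hp p).const_mul (A p))
    have h2 := hsum.fun_pow 2
    have h0 : (∑ p : Fin (d+1) → Fin n, A p * ∏ k, (Q (p k) j' + 0 * E (p k) j')) = W j' := by
      simp [hW]
    rw [h0] at h2
    simpa [pow_one] using h2
  have hfun : (fun t : ℝ => f (Q + t • E)) =
      fun t : ℝ => ∑ j' : Fin n,
        (∑ p : Fin (d+1) → Fin n, A p * ∏ k, (Q (p k) j' + t * E (p k) j')) ^ 2 := by
    funext t
    rw [hf]
    simp [Matrix.add_apply, Matrix.smul_apply, smul_eq_mul]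
  have hD : HasDerivAt (fun t : ℝ => f (Q + t • E)) (∑ j', 2 * W j' * C j') 0 := by
    rw [hfun]
    exact HasDerivAt.fun_sum (fun j' _ => key j')
  rw [hD.deriv]
  -- Now the algebraic part
  have hCz : ∀ j' : Fin n, j' ≠ j → C j' = 0 := by
    intro j' hj'
    simp [hC, hE, Matrix.single, hj'.symm]
  have hstep1 : (∑ j', 2 * W j' * C j') = 2 * W j * C j := by
    refine Finset.sum_eq_single j (fun j' _ hj' => by rw [hCz j' hj']; ring) (by simp)
  rw [hstep1]
  have hCj : C j = ((d : ℝ) + 1) * ∑ p : Fin d → Fin n, A (Fin.cons i p) * ∏ k, Q (p k) j := by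
    have hEapp : ∀ a b : Fin n, E a b = if i = a ∧ j = b then (1:ℝ) else 0 := by
      intro a b; simp [hE, Matrix.single]
    calc C j = ∑ k : Fin (d+1), ∑ p : Fin (d+1) → Fin n,
          A p * ((∏ m ∈ Finset.univ.erase k, Q (p m) j) * E (p k) j) := by
          rw [hC, Finset.sum_comm]
          exact Finset.sum_congr rfl fun p _ => by rw [Finset.mul_sum]
      _ = ∑ k : Fin (d+1), ∑ p : Fin d → Fin n,
          A (Fin.cons i p) * ∏ m, Q (p m) j := by
          refine Finset.sum_congr rfl fun k _ => ?_
          rw [← Equiv.sum_comp (Fin.insertNthEquiv (fun _ => Fin n) k)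
            (fun p => A p * ((∏ m ∈ Finset.univ.erase k, Q (p m) j) * E (p k) j)),
            Fintype.sum_prod_type]
          have hterm : ∀ (x : Fin n) (r : Fin d → Fin n),
              A (Fin.insertNthEquiv (fun _ => Fin n) k (x, r)) *
                ((∏ m ∈ Finset.univ.erase k,
                    Q ((Fin.insertNthEquiv (fun _ => Fin n) k (x, r)) m) j) *
                  E ((Fin.insertNthEquiv (fun _ => Fin n) k (x, r)) k) j) =
              if i = x then A (Fin.cons x r) * ∏ m, Q (r m) j else 0 := by
            intro x r
            have hins : (Fin.insertNthEquiv (fun _ => Fin n) k (x, r)) = Fin.insertNth k x r := rfl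
            rw [hins, Fin.insertNth_apply_same, hEapp]
            simp only [and_true]
            by_cases hx : i = x
            · have hA : A (Fin.insertNth k x r) = A (Fin.cons x r) := by
                rw [← insertNth_comp_permCons k x r, hsym]
              rw [if_pos hx, if_pos hx, hA, mul_one]
              congr 1
              rw [prod_erase_eq_succAbove]
              exact Finset.prod_congr rfl fun m _ => by rw [Fin.insertNth_apply_succAbove]
            · rw [if_neg hx, if_neg hx, mul_zero, mul_zero]
          calc (∑ x, ∑ r : Fin d → Fin n,
                A (Fin.insertNthEquiv (fun _ => Fin n) k (x, r)) *
                  ((∏ m ∈ Finset.univ.erase k,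
                      Q ((Fin.insertNthEquiv (fun _ => Fin n) k (x, r)) m) j) *
                    E ((Fin.insertNthEquiv (fun _ => Fin n) k (x, r)) k) j))
              = ∑ x, ∑ r : Fin d → Fin n,
                if i = x then A (Fin.cons x r) * ∏ m, Q (r m) j else 0 := by
                exact Finset.sum_congr rfl fun x _ => Finset.sum_congr rfl fun r _ => hterm x r
            _ = ∑ r : Fin d → Fin n, A (Fin.cons i r) * ∏ m, Q (r m) j := by
                rw [Finset.sum_comm]
                refine Finset.sum_congr rfl fun r _ => ?_
                simp
      _ = ((d : ℝ) + 1) * ∑ p : Fin d → Fin n, A (Fin.cons i p) * ∏ k, Q (p k) j := by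
          rw [Finset.sum_const, Finset.card_univ, Fintype.card_fin, nsmul_eq_mul]
          push_cast; ring
  rw [hCj, hW]
  ring
end

section
/- Let n ≥ 2, d ≥ 1, and let A : (Fin d → Fin n) → ℝ be a symmetric d-th order tensor. Define f(Q) := Σ_{j=1}^n (W(Q)(j,…,j))², where W(Q)(i₁,…,i_d) := Σ_{p₁,…,p_d} A(p₁,…,p_d) Q_{p₁ i₁} ⋯ Q_{p_d i_d}. Then for every Q ∈ SO(n), every pair 1 ≤ i < j ≤ n, and every θ ∈ ℝ: f(Q G(i,j,θ + π/2)) = f(Q G(i,j,θ)). -/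
open Matrix Real Filter Set

attribute [local instance] Matrix.frobeniusNormedAddCommGroup Matrix.frobeniusNormedSpace

theorem stmt_15 {n d : ℕ} (hn : 2 ≤ n) (hd : 1 ≤ d) (A : (Fin d → Fin n) → ℝ)
    (hsym : ∀ (p : Fin d → Fin n) (σ : Equiv.Perm (Fin d)), A (p ∘ σ) = A p)
    (f : Matrix (Fin n) (Fin n) ℝ → ℝ)
    (hf : ∀ Q, f Q = ∑ j, (∑ p : Fin d → Fin n, A p * ∏ k, Q (p k) j) ^ 2)
    (Q : Matrix (Fin n) (Fin n) ℝ) (hQ : Q ∈ SOn n)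
    (i j : Fin n) (hij : i < j) (θ : ℝ) :
    f (Q * givens i j (θ + π / 2)) = f (Q * givens i j θ) := by
  have hne : i ≠ j := hij.ne
  have hne' : j ≠ i := hij.ne'
  have hGi : ∀ m : Fin n, givens i j (θ + π / 2) m i = givens i j θ m j := by
    intro m
    rcases eq_or_ne m i with h | h
    · subst h
      simp [givens, hne, hne', Real.cos_add_pi_div_two]
    · rcases eq_or_ne m j with h2 | h2
      · subst h2
        simp [givens, hne, hne', Real.sin_add_pi_div_two]
      · simp [givens, h, h2, hne, hne']
  have hGj : ∀ m : Fin n, givens i j (θ + π / 2) m j = -(givens i j θ m i) := by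
    intro m
    rcases eq_or_ne m i with h | h
    · subst h
      simp [givens, hne, hne', Real.sin_add_pi_div_two]
    · rcases eq_or_ne m j with h2 | h2
      · subst h2
        simp [givens, hne, hne', Real.cos_add_pi_div_two]
      · simp [givens, h, h2, hne, hne']
  have hGo : ∀ (m l : Fin n), l ≠ i → l ≠ j → givens i j (θ + π / 2) m l = givens i j θ m l := by
    intro m l h1 h2
    rcases eq_or_ne m l with h | h
    · subst h
      simp [givens, h1, h2]
    · simp [givens, h, h1, h2]
  set M := Q * givens i j θ with hM
  set M' := Q * givens i j (θ + π / 2) with hM'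
  have hcol : ∀ k l, M' k l = if l = i then M k j else if l = j then -(M k i) else M k l := by
    intro k l
    by_cases h1 : l = i
    · subst h1
      simp only [hM, hM', Matrix.mul_apply, if_pos rfl]
      exact Finset.sum_congr rfl fun m _ => by rw [hGi]
    · by_cases h2 : l = j
      · subst h2
        simp only [hM, hM', Matrix.mul_apply, if_neg h1, if_pos rfl, ← Finset.sum_neg_distrib]
        exact Finset.sum_congr rfl fun m _ => by rw [hGj]; ring
      · simp only [hM, hM', Matrix.mul_apply, if_neg h1, if_neg h2]
        exact Finset.sum_congr rfl fun m _ => by rw [hGo m l h1 h2]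
  rw [hf, hf]
  refine Fintype.sum_equiv (Equiv.swap i j) _ _ fun l => ?_
  by_cases h1 : l = i
  · subst h1
    simp only [Equiv.swap_apply_left]
    refine congrArg (· ^ 2) (Finset.sum_congr rfl fun p _ => ?_)
    refine congrArg (A p * ·) (Finset.prod_congr rfl fun k _ => ?_)
    rw [hcol, if_pos rfl]
  · by_cases h2 : l = j
    · subst h2
      simp only [Equiv.swap_apply_right]
      have hp : ∀ p : Fin d → Fin n, ∏ k, M' (p k) l = (-1 : ℝ) ^ d * ∏ k, M (p k) i := by
        intro p
        calc ∏ k, M' (p k) l = ∏ k, (-1 : ℝ) * M (p k) i := by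
              refine Finset.prod_congr rfl fun k _ => ?_
              rw [hcol, if_neg h1, if_pos rfl]; ring
          _ = (∏ _k : Fin d, (-1 : ℝ)) * ∏ k, M (p k) i := Finset.prod_mul_distrib
          _ = (-1 : ℝ) ^ d * ∏ k, M (p k) i := by
              rw [Finset.prod_const, Finset.card_univ, Fintype.card_fin]
      have hs : (∑ p : Fin d → Fin n, A p * ∏ k, M' (p k) l) =
          (-1 : ℝ) ^ d * ∑ p : Fin d → Fin n, A p * ∏ k, M (p k) i := by
        rw [Finset.mul_sum]
        exact Finset.sum_congr rfl fun p _ => by rw [hp]; ring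
      rw [hs, mul_pow, ← pow_mul, Nat.mul_comm d 2, pow_mul]
      norm_num
    · simp only [Equiv.swap_apply_of_ne_of_ne h1 h2]
      refine congrArg (· ^ 2) (Finset.sum_congr rfl fun p _ => ?_)
      refine congrArg (A p * ·) (Finset.prod_congr rfl fun k _ => ?_)
      rw [hcol, if_neg h1, if_neg h2]
end
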